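/- Let T ≥ 1 and L ≥ 0 be natural numbers, let B ≥ 0 and K ≥ 0, and let g be a real-valued function of an (L+1)-tuple of d×d real matrices that is K-Lipschitz with respect to the sum of Frobenius distances, i.e. |g(A_0, …, A_L) − g(A'_0, …, A'_L)| ≤ K·∑_{l=0}^L ‖A_l − A'_l‖_F. For each l ∈ {0, …, L}, let h_{l,1}, …, h_{l,T+1} be vectors in ℝ^d with ‖h_{l,t}‖ ≤ B for all t, let Σ_l be the empirical covariance of h_{l,1}, …, h_{l,T}, and let Σ'_l be the empirical covariance of h_{l,1}, …, h_{l,T+1}. Then |g(Σ_0, …, Σ_L) − g(Σ'_0, …, Σ'_L)| ≤ 6(L+1)·K·B²/(T+1). -/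

import Mathlib

attribute [local instance] Matrix.frobeniusNormedAddCommGroup Matrix.frobeniusNormedSpace Matrix.frobeniusIsBoundedSMul

/-- The outer product `a bᵀ` of two vectors in `ℝ^d`, as a `d × d` matrix. -/
def outerProd {d : ℕ} (a b : EuclideanSpace ℝ (Fin d)) :
    Matrix (Fin d) (Fin d) ℝ :=
  Matrix.of fun i j => a i * b j

/-- The Frobenius norm of a `d × d` real matrix. -/
noncomputable def frobNorm {d : ℕ} (M : Matrix (Fin d) (Fin d) ℝ) : ℝ :=
  Real.sqrt (∑ i, ∑ j, (M i j) ^ 2)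

/-- The empirical covariance `(1/T)·∑_{t=1}^T (h_t − h̄)(h_t − h̄)ᵀ` of the
vectors `h 1, …, h T`. -/
noncomputable def empCov {d : ℕ} (T : ℕ) (h : ℕ → EuclideanSpace ℝ (Fin d)) :
    Matrix (Fin d) (Fin d) ℝ :=
  (T : ℝ)⁻¹ • ∑ t ∈ Finset.Icc 1 T,
    outerProd (h t - (T : ℝ)⁻¹ • ∑ s ∈ Finset.Icc 1 T, h s)
      (h t - (T : ℝ)⁻¹ • ∑ s ∈ Finset.Icc 1 T, h s)

lemma frobNorm_eq {d : ℕ} (M : Matrix (Fin d) (Fin d) ℝ) : frobNorm M = ‖M‖ := by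
  rw [Matrix.frobenius_norm_def, frobNorm, Real.sqrt_eq_rpow]
  congr 1
  refine Finset.sum_congr rfl fun i _ => Finset.sum_congr rfl fun j _ => ?_
  rw [Real.norm_eq_abs, Real.rpow_two, sq_abs]

lemma norm_outerProd {d : ℕ} (a b : EuclideanSpace ℝ (Fin d)) :
    ‖outerProd a b‖ ≤ ‖a‖ * ‖b‖ := by
  rw [Matrix.frobenius_norm_def]
  have ha : ‖a‖ = Real.sqrt (∑ i, (a i)^2) := by
    rw [EuclideanSpace.norm_eq]
    congr 1; exact Finset.sum_congr rfl fun i _ => by rw [Real.norm_eq_abs, sq_abs]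
  have hb : ‖b‖ = Real.sqrt (∑ i, (b i)^2) := by
    rw [EuclideanSpace.norm_eq]
    congr 1; exact Finset.sum_congr rfl fun i _ => by rw [Real.norm_eq_abs, sq_abs]
  have : (∑ i, ∑ j, ‖outerProd a b i j‖ ^ (2:ℝ)) = (∑ i, (a i)^2) * (∑ j, (b j)^2) := by
    rw [Finset.sum_mul_sum]
    refine Finset.sum_congr rfl fun i _ => Finset.sum_congr rfl fun j _ => ?_
    rw [Real.norm_eq_abs, Real.rpow_two, sq_abs, outerProd, Matrix.of_apply, mul_pow]
  rw [this, ha, hb, ← Real.sqrt_eq_rpow, Real.sqrt_mul (by positivity)]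

lemma key {E : Type*} [NormedAddCommGroup E] [NormedSpace ℝ E] (T : ℕ) (hT : 1 ≤ T)
    (f : ℕ → E) (C : ℝ) (hf : ∀ t ∈ Finset.Icc 1 (T+1), ‖f t‖ ≤ C) :
    ‖(T:ℝ)⁻¹ • ∑ t ∈ Finset.Icc 1 T, f t - ((T:ℝ)+1)⁻¹ • ∑ t ∈ Finset.Icc 1 (T+1), f t‖
      ≤ 2*C/((T:ℝ)+1) := by
  have hC : 0 ≤ C := le_trans (norm_nonneg _) (hf 1 (by simp))
  have hT0 : (0:ℝ) < T := by exact_mod_cast hT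
  have hT1 : (0:ℝ) < (T:ℝ)+1 := by positivity
  rw [Finset.sum_Icc_succ_top (by omega : 1 ≤ T+1)]
  have heq : (T:ℝ)⁻¹ • ∑ t ∈ Finset.Icc 1 T, f t
      - ((T:ℝ)+1)⁻¹ • (∑ t ∈ Finset.Icc 1 T, f t + f (T+1))
      = ((T:ℝ)⁻¹ - ((T:ℝ)+1)⁻¹) • ∑ t ∈ Finset.Icc 1 T, f t - ((T:ℝ)+1)⁻¹ • f (T+1) := by
    rw [smul_add, sub_smul]; abel
  rw [heq]
  have hsum : ‖∑ t ∈ Finset.Icc 1 T, f t‖ ≤ (T:ℝ) * C := by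
    calc ‖∑ t ∈ Finset.Icc 1 T, f t‖ ≤ ∑ t ∈ Finset.Icc 1 T, ‖f t‖ := norm_sum_le _ _
    _ ≤ ∑ t ∈ Finset.Icc 1 T, C := Finset.sum_le_sum fun t ht => hf t (by
        simp only [Finset.mem_Icc] at ht ⊢; omega)
    _ = (T:ℝ) * C := by rw [Finset.sum_const, Nat.card_Icc]; simp [mul_comm]
  have hco : (0:ℝ) ≤ (T:ℝ)⁻¹ - ((T:ℝ)+1)⁻¹ := by
    rw [sub_nonneg]; exact inv_anti₀ hT0 (by linarith)
  calc ‖((T:ℝ)⁻¹ - ((T:ℝ)+1)⁻¹) • ∑ t ∈ Finset.Icc 1 T, f t - ((T:ℝ)+1)⁻¹ • f (T+1)‖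
      ≤ ‖((T:ℝ)⁻¹ - ((T:ℝ)+1)⁻¹) • ∑ t ∈ Finset.Icc 1 T, f t‖ + ‖((T:ℝ)+1)⁻¹ • f (T+1)‖ :=
        norm_sub_le _ _
    _ ≤ ((T:ℝ)⁻¹ - ((T:ℝ)+1)⁻¹) * ((T:ℝ)*C) + ((T:ℝ)+1)⁻¹ * C := by
        gcongr
        · rw [norm_smul, Real.norm_eq_abs, abs_of_nonneg hco]
          gcongr
        · rw [norm_smul, Real.norm_eq_abs, abs_of_nonneg (by positivity)]
          gcongr
          exact hf (T+1) (by simp)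
    _ = 2*C/((T:ℝ)+1) := by field_simp; ring

lemma empCov_eq {d : ℕ} (T : ℕ) (hT : 1 ≤ T) (h : ℕ → EuclideanSpace ℝ (Fin d)) :
    empCov T h = (T:ℝ)⁻¹ • ∑ t ∈ Finset.Icc 1 T, outerProd (h t) (h t)
      - outerProd ((T:ℝ)⁻¹ • ∑ s ∈ Finset.Icc 1 T, h s)
          ((T:ℝ)⁻¹ • ∑ s ∈ Finset.Icc 1 T, h s) := by
  have hT0 : (T:ℝ) ≠ 0 := by positivity
  ext i j
  simp only [empCov, outerProd, Matrix.sub_apply, Matrix.smul_apply, Matrix.sum_apply,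
    Matrix.of_apply, PiLp.sub_apply, PiLp.smul_apply, smul_eq_mul]
  have hsum_apply : ∀ (i : Fin d), (∑ s ∈ Finset.Icc 1 T, h s) i = ∑ s ∈ Finset.Icc 1 T, h s i := by
    intro i; simp only [WithLp.ofLp_sum, Finset.sum_apply]
  rw [hsum_apply, hsum_apply]
  set A := ∑ s ∈ Finset.Icc 1 T, h s i with hA
  set Bz := ∑ s ∈ Finset.Icc 1 T, h s j with hB
  have expand : ∑ t ∈ Finset.Icc 1 T, (h t i - (T:ℝ)⁻¹ * A) * (h t j - (T:ℝ)⁻¹ * Bz)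
      = ∑ t ∈ Finset.Icc 1 T, h t i * h t j - (T:ℝ)⁻¹ * A * Bz := by
    have : ∀ t, (h t i - (T:ℝ)⁻¹ * A) * (h t j - (T:ℝ)⁻¹ * Bz)
        = h t i * h t j - ((T:ℝ)⁻¹ * A) * h t j - ((T:ℝ)⁻¹ * Bz) * h t i
          + ((T:ℝ)⁻¹ * A) * ((T:ℝ)⁻¹ * Bz) := fun t => by ring
    simp only [this, Finset.sum_add_distrib, Finset.sum_sub_distrib, ← Finset.mul_sum,
      Finset.sum_const, Nat.card_Icc, Nat.add_sub_cancel, nsmul_eq_mul, ← hA, ← hB]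
    field_simp
    ring
  rw [expand, mul_sub]
  congr 1
  field_simp

lemma outerProd_diff {d : ℕ} (m m' : EuclideanSpace ℝ (Fin d)) :
    outerProd m m - outerProd m' m' = outerProd m (m - m') + outerProd (m - m') m' := by
  ext i j
  simp only [outerProd, Matrix.sub_apply, Matrix.add_apply, Matrix.of_apply, PiLp.sub_apply]
  ring

lemma empCov_shift {d T : ℕ} (hT : 1 ≤ T) {B : ℝ} (hB : 0 ≤ B)
    (h : ℕ → EuclideanSpace ℝ (Fin d)) (hb : ∀ t ∈ Finset.Icc 1 (T+1), ‖h t‖ ≤ B) :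
    frobNorm (empCov T h - empCov (T+1) h) ≤ 6 * B^2 / ((T:ℝ)+1) := by
  have hT1 : (0:ℝ) < (T:ℝ)+1 := by positivity
  have hcast : ((T+1 : ℕ) : ℝ) = (T:ℝ)+1 := by push_cast; ring
  set m : EuclideanSpace ℝ (Fin d) := (T:ℝ)⁻¹ • ∑ s ∈ Finset.Icc 1 T, h s with hm
  set m' : EuclideanSpace ℝ (Fin d) := ((T:ℝ)+1)⁻¹ • ∑ s ∈ Finset.Icc 1 (T+1), h s with hm'
  have hmB : ‖m‖ ≤ B := by
    rw [hm, norm_smul, Real.norm_eq_abs, abs_of_nonneg (by positivity)]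
    calc (T:ℝ)⁻¹ * ‖∑ s ∈ Finset.Icc 1 T, h s‖
        ≤ (T:ℝ)⁻¹ * ((T:ℝ) * B) := by
          gcongr
          calc ‖∑ s ∈ Finset.Icc 1 T, h s‖ ≤ ∑ s ∈ Finset.Icc 1 T, ‖h s‖ := norm_sum_le _ _
          _ ≤ ∑ s ∈ Finset.Icc 1 T, B := Finset.sum_le_sum fun t ht => hb t (by
              simp only [Finset.mem_Icc] at ht ⊢; omega)
          _ = (T:ℝ) * B := by rw [Finset.sum_const, Nat.card_Icc]; simp [mul_comm]
      _ = B := by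
          have : (T:ℝ) ≠ 0 := by positivity
          field_simp
  have hm'B : ‖m'‖ ≤ B := by
    rw [hm', norm_smul, Real.norm_eq_abs, abs_of_nonneg (by positivity)]
    calc ((T:ℝ)+1)⁻¹ * ‖∑ s ∈ Finset.Icc 1 (T+1), h s‖
        ≤ ((T:ℝ)+1)⁻¹ * (((T:ℝ)+1) * B) := by
          gcongr
          calc ‖∑ s ∈ Finset.Icc 1 (T+1), h s‖ ≤ ∑ s ∈ Finset.Icc 1 (T+1), ‖h s‖ :=
              norm_sum_le _ _
          _ ≤ ∑ s ∈ Finset.Icc 1 (T+1), B := Finset.sum_le_sum fun t ht => hb t ht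
          _ = ((T:ℝ)+1) * B := by rw [Finset.sum_const, Nat.card_Icc]; push_cast; simp [mul_comm]
      _ = B := by field_simp
  have hmm' : ‖m - m'‖ ≤ 2*B/((T:ℝ)+1) := key T hT h B hb
  have hCB : ∀ t ∈ Finset.Icc 1 (T+1), ‖outerProd (h t) (h t)‖ ≤ B^2 := fun t ht => by
    calc ‖outerProd (h t) (h t)‖ ≤ ‖h t‖ * ‖h t‖ := norm_outerProd _ _
    _ ≤ B * B := by have := hb t ht; have := norm_nonneg (h t); nlinarith
    _ = B^2 := (sq B).symm
  have hP : ‖(T:ℝ)⁻¹ • ∑ t ∈ Finset.Icc 1 T, outerProd (h t) (h t)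
      - ((T:ℝ)+1)⁻¹ • ∑ t ∈ Finset.Icc 1 (T+1), outerProd (h t) (h t)‖ ≤ 2*B^2/((T:ℝ)+1) :=
    key T hT _ (B^2) hCB
  have hmean : ‖outerProd m m - outerProd m' m'‖ ≤ 4*B^2/((T:ℝ)+1) := by
    rw [outerProd_diff]
    calc ‖outerProd m (m - m') + outerProd (m - m') m'‖
        ≤ ‖outerProd m (m - m')‖ + ‖outerProd (m - m') m'‖ := norm_add_le _ _
      _ ≤ ‖m‖ * ‖m - m'‖ + ‖m - m'‖ * ‖m'‖ := add_le_add (norm_outerProd _ _) (norm_outerProd _ _)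
      _ ≤ B * (2*B/((T:ℝ)+1)) + (2*B/((T:ℝ)+1)) * B := by
          gcongr <;> first | exact norm_nonneg _ | positivity
      _ = 4*B^2/((T:ℝ)+1) := by field_simp; ring
  rw [frobNorm_eq, empCov_eq T hT h, empCov_eq (T+1) (by omega) h]
  rw [hcast]
  have hre : ((T:ℝ)⁻¹ • ∑ t ∈ Finset.Icc 1 T, outerProd (h t) (h t) - outerProd m m)
      - (((T:ℝ)+1)⁻¹ • ∑ t ∈ Finset.Icc 1 (T+1), outerProd (h t) (h t) - outerProd m' m')
      = ((T:ℝ)⁻¹ • ∑ t ∈ Finset.Icc 1 T, outerProd (h t) (h t)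
          - ((T:ℝ)+1)⁻¹ • ∑ t ∈ Finset.Icc 1 (T+1), outerProd (h t) (h t))
        - (outerProd m m - outerProd m' m') := by abel
  rw [hre]
  calc ‖_ - (outerProd m m - outerProd m' m')‖
      ≤ ‖(T:ℝ)⁻¹ • ∑ t ∈ Finset.Icc 1 T, outerProd (h t) (h t)
          - ((T:ℝ)+1)⁻¹ • ∑ t ∈ Finset.Icc 1 (T+1), outerProd (h t) (h t)‖
        + ‖outerProd m m - outerProd m' m'‖ := norm_sub_le _ _
    _ ≤ 2*B^2/((T:ℝ)+1) + 4*B^2/((T:ℝ)+1) := add_le_add hP hmean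
    _ = 6 * B^2 / ((T:ℝ)+1) := by ring

/-- a `K`-Lipschitz (sum of Frobenius distances) function of the
per-layer covariances `(Σ_0, …, Σ_L)` changes by at most `6(L+1)KB²/(T+1)`
when one vector is appended to each layer. -/
theorem lipschitz_of_empCov_shift_le (d T L : ℕ) (hT : 1 ≤ T) (B K : ℝ)
    (hB : 0 ≤ B) (hK : 0 ≤ K)
    (g : (Fin (L + 1) → Matrix (Fin d) (Fin d) ℝ) → ℝ)
    (hg : ∀ A A' : Fin (L + 1) → Matrix (Fin d) (Fin d) ℝ,
      |g A - g A'| ≤ K * ∑ l, frobNorm (A l - A' l))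
    (h : Fin (L + 1) → ℕ → EuclideanSpace ℝ (Fin d))
    (hbound : ∀ l, ∀ t ∈ Finset.Icc 1 (T + 1), ‖h l t‖ ≤ B) :
    |g (fun l => empCov T (h l)) - g (fun l => empCov (T + 1) (h l))|
      ≤ 6 * ((L : ℝ) + 1) * K * B ^ 2 / ((T : ℝ) + 1) := by
  have hT1 : (0:ℝ) < (T:ℝ)+1 := by positivity
  calc |g (fun l => empCov T (h l)) - g (fun l => empCov (T + 1) (h l))|
      ≤ K * ∑ l : Fin (L+1), frobNorm (empCov T (h l) - empCov (T+1) (h l)) := hg _ _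
    _ ≤ K * ∑ l : Fin (L+1), 6 * B^2 / ((T:ℝ)+1) := by
        gcongr with l _
        exact empCov_shift hT hB (h l) (hbound l)
    _ = K * (((L:ℝ)+1) * (6 * B^2 / ((T:ℝ)+1))) := by
        rw [Finset.sum_const, Finset.card_univ, Fintype.card_fin, nsmul_eq_mul]; push_cast; ring
    _ = 6 * ((L : ℝ) + 1) * K * B ^ 2 / ((T : ℝ) + 1) := by field_simp
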